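/- If X is a random vector with ‖X‖_s ≤ R almost surely and B is a matrix with ‖B'‖_s ≤ C̄ (induced ℓ_s norm of the transpose), then for any one-hot y, the log-loss satisfies h_B(X, y) ≤ log K + C̄ R (1 + K^{1/r}) almost surely, where 1/r + 1/s = 1. -/
import Mathlib


open Finset MeasureTheory

noncomputable def lpnorm (t : ℝ) {K : ℕ} (x : Fin K → ℝ) : ℝ :=
  (∑ i, |x i| ^ t) ^ (1 / t)

def stdBasis {K : ℕ} (i : Fin K) : Fin K → ℝ := fun m => if m = i then 1 else 0

noncomputable def opNorm (s : ℝ) {m n : ℕ} (A : Matrix (Fin m) (Fin n) ℝ) : ℝ :=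
  sSup {c | ∃ x : Fin n → ℝ, x ≠ 0 ∧ c = lpnorm s (A.mulVec x) / lpnorm s x}

noncomputable def hloss {p K : ℕ} (B : Matrix (Fin p) (Fin K) ℝ)
    (x : Fin p → ℝ) (y : Fin K → ℝ) : ℝ :=
  Real.log (∑ k, Real.exp (∑ i, B i k * x i)) - ∑ k, y k * ∑ i, B i k * x i

lemma lpnorm_nonneg (t : ℝ) {K : ℕ} (x : Fin K → ℝ) : 0 ≤ lpnorm t x :=
  Real.rpow_nonneg (Finset.sum_nonneg fun i _ => Real.rpow_nonneg (abs_nonneg _) _) _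

lemma abs_le_lpnorm {s : ℝ} (hs : 0 < s) {K : ℕ} (x : Fin K → ℝ) (k : Fin K) :
    |x k| ≤ lpnorm s x := by
  have h1 : |x k| ^ s ≤ ∑ i, |x i| ^ s :=
    Finset.single_le_sum (f := fun i => |x i| ^ s)
      (fun i _ => Real.rpow_nonneg (abs_nonneg _) _) (Finset.mem_univ k)
  have h2 := Real.rpow_le_rpow (Real.rpow_nonneg (abs_nonneg _) _) h1
    (by positivity : (0:ℝ) ≤ 1/s)
  rw [lpnorm]
  rwa [← Real.rpow_mul (abs_nonneg _), mul_one_div_cancel hs.ne', Real.rpow_one] at h2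

lemma lpnorm_pos {s : ℝ} (hs : 0 < s) {K : ℕ} {x : Fin K → ℝ} (hx : x ≠ 0) :
    0 < lpnorm s x := by
  obtain ⟨k, hk⟩ := Function.ne_iff.mp hx
  exact lt_of_lt_of_le (abs_pos.mpr hk) (abs_le_lpnorm hs x k)

lemma mulVec_lpnorm_le {s : ℝ} (hs : 1 ≤ s) {m n : ℕ} (A : Matrix (Fin m) (Fin n) ℝ)
    (x : Fin n → ℝ) :
    lpnorm s (A.mulVec x) ≤ (∑ k, (∑ i, |A k i|) ^ s) ^ (1/s) * lpnorm s x := by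
  have hs0 : 0 < s := lt_of_lt_of_le one_pos hs
  set N := lpnorm s x with hN
  have hN0 : 0 ≤ N := lpnorm_nonneg s x
  have key : ∀ k, |A.mulVec x k| ≤ (∑ i, |A k i|) * N := by
    intro k
    calc |A.mulVec x k| = |∑ i, A k i * x i| := by simp [Matrix.mulVec, dotProduct]
    _ ≤ ∑ i, |A k i * x i| := Finset.abs_sum_le_sum_abs _ _
    _ = ∑ i, |A k i| * |x i| := by simp [abs_mul]
    _ ≤ ∑ i, |A k i| * N :=
        Finset.sum_le_sum fun i _ =>
          mul_le_mul_of_nonneg_left (abs_le_lpnorm hs0 x i) (abs_nonneg _)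
    _ = (∑ i, |A k i|) * N := by rw [Finset.sum_mul]
  have key2 : ∑ k, |A.mulVec x k| ^ s ≤ (∑ k, (∑ i, |A k i|) ^ s) * N ^ s := by
    rw [Finset.sum_mul]
    refine Finset.sum_le_sum fun k _ => ?_
    calc |A.mulVec x k| ^ s ≤ ((∑ i, |A k i|) * N) ^ s :=
          Real.rpow_le_rpow (abs_nonneg _) (key k) hs0.le
    _ = (∑ i, |A k i|) ^ s * N ^ s :=
          Real.mul_rpow (Finset.sum_nonneg fun i _ => abs_nonneg _) hN0
  have h3 := Real.rpow_le_rpow (Finset.sum_nonneg fun k _ => Real.rpow_nonneg (abs_nonneg _) _)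
    key2 (by positivity : (0:ℝ) ≤ 1/s)
  calc lpnorm s (A.mulVec x) ≤ ((∑ k, (∑ i, |A k i|) ^ s) * N ^ s) ^ (1/s) := h3
  _ = (∑ k, (∑ i, |A k i|) ^ s) ^ (1/s) * (N ^ s) ^ (1/s) :=
      Real.mul_rpow (Finset.sum_nonneg fun k _ =>
        Real.rpow_nonneg (Finset.sum_nonneg fun i _ => abs_nonneg _) _) (by positivity)
  _ = (∑ k, (∑ i, |A k i|) ^ s) ^ (1/s) * N := by
      rw [← Real.rpow_mul hN0, mul_one_div_cancel hs0.ne', Real.rpow_one]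

lemma lpnorm_zero {s : ℝ} (hs : 0 < s) {K : ℕ} : lpnorm s (0 : Fin K → ℝ) = 0 := by
  simp [lpnorm, Real.zero_rpow hs.ne']
  exact Real.zero_rpow (by positivity)

lemma mulVec_le_opNorm {s : ℝ} (hs : 1 ≤ s) {m n : ℕ} (A : Matrix (Fin m) (Fin n) ℝ)
    (x : Fin n → ℝ) :
    lpnorm s (A.mulVec x) ≤ opNorm s A * lpnorm s x := by
  have hs0 : 0 < s := lt_of_lt_of_le one_pos hs
  by_cases hx : x = 0
  · rw [hx, Matrix.mulVec_zero, lpnorm_zero hs0, lpnorm_zero hs0, mul_zero]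
  · have hNx : 0 < lpnorm s x := lpnorm_pos hs0 hx
    have hbdd : BddAbove {c | ∃ y : Fin n → ℝ, y ≠ 0 ∧ c = lpnorm s (A.mulVec y) / lpnorm s y} := by
      refine ⟨(∑ k, (∑ i, |A k i|) ^ s) ^ (1/s), ?_⟩
      rintro c ⟨y, hy, rfl⟩
      have hNy : 0 < lpnorm s y := lpnorm_pos hs0 hy
      rw [div_le_iff₀ hNy]
      exact mulVec_lpnorm_le hs A y
    have hmem : lpnorm s (A.mulVec x) / lpnorm s x ∈
        {c | ∃ y : Fin n → ℝ, y ≠ 0 ∧ c = lpnorm s (A.mulVec y) / lpnorm s y} := ⟨x, hx, rfl⟩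
    have := le_csSup hbdd hmem
    rw [div_le_iff₀ hNx] at this
    exact this

theorem stmt9 {p K : ℕ} {Ω : Type*} [MeasurableSpace Ω] (μ : Measure Ω)
    [IsProbabilityMeasure μ] (X : Ω → (Fin p → ℝ)) (R C : ℝ)
    (r s : ℝ) (hr : 1 ≤ r) (hs : 1 ≤ s) (hrs : 1 / r + 1 / s = 1)
    (hX : ∀ᵐ ω ∂μ, lpnorm s (X ω) ≤ R)
    (B : Matrix (Fin p) (Fin K) ℝ) (hB : opNorm s B.transpose ≤ C)
    (j : Fin K) :
    ∀ᵐ ω ∂μ, hloss B (X ω) (stdBasis j) ≤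
      Real.log K + C * R * (1 + (K : ℝ) ^ (1 / r)) := by
  have hs0 : 0 < s := lt_of_lt_of_le one_pos hs
  have hK : 0 < K := j.pos
  have hR : 0 ≤ R := by
    obtain ⟨ω, hω⟩ := hX.exists
    exact le_trans (lpnorm_nonneg s (X ω)) hω
  have hC : 0 ≤ C := by
    refine le_trans ?_ hB
    apply Real.sSup_nonneg
    rintro c ⟨y, hy, rfl⟩
    exact div_nonneg (lpnorm_nonneg _ _) (lpnorm_nonneg _ _)
  have hKr : (1 : ℝ) ≤ (K : ℝ) ^ (1 / r) :=
    Real.one_le_rpow (by exact_mod_cast hK) (by positivity)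
  filter_upwards [hX] with ω hω
  set x := X ω with hxdef
  set a : Fin K → ℝ := B.transpose.mulVec x with ha
  have haeq : ∀ k, a k = ∑ i, B i k * x i := by
    intro k
    simp [ha, Matrix.mulVec, dotProduct, Matrix.transpose]
  have hNa : lpnorm s a ≤ C * R := by
    calc lpnorm s a ≤ opNorm s B.transpose * lpnorm s x := mulVec_le_opNorm hs _ _
    _ ≤ C * lpnorm s x := mul_le_mul_of_nonneg_right hB (lpnorm_nonneg _ _)
    _ ≤ C * R := mul_le_mul_of_nonneg_left hω hC
  have hak : ∀ k, a k ≤ C * R := fun k =>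
    le_trans (le_trans (le_abs_self _) (abs_le_lpnorm hs0 a k)) hNa
  have haj : -(C * R) ≤ a j :=
    neg_le_of_neg_le (le_trans (le_trans (neg_le_abs _) (abs_le_lpnorm hs0 a j)) hNa)
  have hsum : ∑ k, Real.exp (∑ i, B i k * x i) ≤ (K : ℝ) * Real.exp (C * R) := by
    calc ∑ k, Real.exp (∑ i, B i k * x i) ≤ ∑ _k : Fin K, Real.exp (C * R) :=
        Finset.sum_le_sum fun k _ => by
          rw [← haeq k]; exact Real.exp_le_exp.mpr (hak k)
    _ = (K : ℝ) * Real.exp (C * R) := by simp [mul_comm]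
  have hpos : 0 < ∑ k, Real.exp (∑ i, B i k * x i) :=
    Finset.sum_pos (fun k _ => Real.exp_pos _) (Finset.univ_nonempty_iff.mpr ⟨j⟩)
  have hlog : Real.log (∑ k, Real.exp (∑ i, B i k * x i)) ≤ Real.log K + C * R := by
    calc Real.log (∑ k, Real.exp (∑ i, B i k * x i))
        ≤ Real.log ((K : ℝ) * Real.exp (C * R)) := Real.log_le_log hpos hsum
    _ = Real.log K + C * R := by
        rw [Real.log_mul (by positivity) (Real.exp_pos _).ne', Real.log_exp]
  have hyterm : ∑ k, stdBasis j k * ∑ i, B i k * x i = a j := by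
    rw [haeq j]
    simp [stdBasis]
  have : hloss B x (stdBasis j) ≤ Real.log K + C * R + C * R := by
    rw [hloss, hyterm]
    linarith [hlog, haj]
  refine le_trans this ?_
  have hCR : 0 ≤ C * R := mul_nonneg hC hR
  nlinarith [hKr, hCR]
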